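/- arXiv:1201.3716 — 2 statements merged into one kernel-verified Lean document; each statement's English description precedes it below -/
import Mathlib

section
/- Let Γ be a group acting on a nonempty set X, and let δ and d be Γ-invariant pseudometrics on X with δ(x,y) ≤ d(x,y) for all x, y ∈ X. Assume: (i) for every γ ∈ Γ, inf_{z ∈ X} δ(z, γ·z) = inf_{z ∈ X} d(z, γ·z); and (ii) for all x, y ∈ X there exists γ ∈ Γ such that d(x, γ·x) = inf_{z ∈ X} d(z, γ·z) and d(x,y) + d(y, γ·x) = d(x, γ·x). Then δ = d, i.e. δ(x,y) = d(x,y) for all x, y ∈ X. -/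
/-- A pseudometric on a set `X`: nonnegative, vanishing on the diagonal, symmetric,
and satisfying the triangle inequality. -/
def IsPseudometric {X : Type*} (d : X → X → ℝ) : Prop :=
  (∀ x y, 0 ≤ d x y) ∧ (∀ x, d x x = 0) ∧ (∀ x y, d x y = d y x) ∧
    (∀ x y z, d x z ≤ d x y + d y z)

/-- if `δ ≤ d` are Γ-invariant pseudometrics on a nonempty `X` with the same
translation lengths, and every pair `(x, y)` lies in a configuration where some `γ` realizes
its translation length at `x` with `y` metrically between `x` and `γ·x`, then `δ = d`. -/
theorem stmt4 {Γ X : Type*} [Group Γ] [MulAction Γ X] [Nonempty X]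
    (δ d : X → X → ℝ)
    (hδ : IsPseudometric δ) (hd : IsPseudometric d)
    (hδinv : ∀ (γ : Γ) (x y : X), δ (γ • x) (γ • y) = δ x y)
    (hdinv : ∀ (γ : Γ) (x y : X), d (γ • x) (γ • y) = d x y)
    (hle : ∀ x y, δ x y ≤ d x y)
    (hspec : ∀ γ : Γ, (⨅ z : X, δ z (γ • z)) = ⨅ z : X, d z (γ • z))
    (haxis : ∀ x y : X, ∃ γ : Γ,
      d x (γ • x) = (⨅ z : X, d z (γ • z)) ∧ d x y + d y (γ • x) = d x (γ • x)) :
    ∀ x y : X, δ x y = d x y := by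
  intro x y
  obtain ⟨γ, h1, h2⟩ := haxis x y
  obtain ⟨hδ0, -, -, hδtri⟩ := hδ
  have hbdd : BddBelow (Set.range fun z : X => δ z (γ • z)) := by
    refine ⟨0, ?_⟩
    rintro r ⟨z, rfl⟩
    exact hδ0 z (γ • z)
  have hinf : d x (γ • x) ≤ δ x (γ • x) := by
    calc d x (γ • x) = ⨅ z : X, d z (γ • z) := h1
    _ = ⨅ z : X, δ z (γ • z) := (hspec γ).symm
    _ ≤ δ x (γ • x) := ciInf_le hbdd x
  have htri : δ x (γ • x) ≤ δ x y + δ y (γ • x) := hδtri x y (γ • x)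
  have hle1 := hle x y
  have hle2 := hle y (γ • x)
  linarith
end

section
/- Equip ℝ³ with the Minkowski bilinear form B(u,v) = −u₀v₀ + u₁v₁ + u₂v₂. Let Ω ⊆ ℝ³ be open and let T : Ω → ℝ be a C² function whose Minkowski gradient ∇T(p) := (−∂₀T(p), ∂₁T(p), ∂₂T(p)) (characterized by B(∇T(p), u) = D T(p)(u) for all u ∈ ℝ³) satisfies B(∇T(p), ∇T(p)) < 0 for all p ∈ Ω. Define λ(p) = (−B(∇T(p), ∇T(p)))^{−1/2}, the unit normal n(p) = −λ(p)·∇T(p), and the vector field ξ(p) = ∇T(p) / B(∇T(p), ∇T(p)). Assume T is quasi-concave in the sense that for every p ∈ Ω and every X ∈ ℝ³ with B(∇T(p), X) = 0 one has B((D n(p))(X), X) ≥ 0, where D n(p) is the (total) derivative of n at p. Let v : Ω → ℝ³ be a differentiable vector field such that B(∇T(p), v(p)) = 0 for all p ∈ Ω and (D v(p))(ξ(p)) = (D ξ(p))(v(p)) for all p ∈ Ω. Then for every p ∈ Ω, the directional derivative of the function q ↦ B(v(q), v(q)) at p in the direction ξ(p) equals 2·λ(p)·B((D n(p))(v(p)),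 v(p)), and in particular is nonnegative. -/
open Real

/-- The Minkowski bilinear form on `ℝ³`: `B(u,v) = −u₀v₀ + u₁v₁ + u₂v₂`. -/
noncomputable def mink (u v : Fin 3 → ℝ) : ℝ :=
  -(u 0 * v 0) + u 1 * v 1 + u 2 * v 2

lemma mink_add_left (a b w : Fin 3 → ℝ) : mink (a + b) w = mink a w + mink b w := by
  simp [mink]; ring

lemma mink_smul_left (t : ℝ) (a w : Fin 3 → ℝ) : mink (t • a) w = t * mink a w := by
  simp [mink]; ring

/-- on a domain `Ω` of Minkowski space `ℝ^{1,2}`, let `T` be a `C²`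
quasi-concave time function with timelike Minkowski gradient `∇T`, let
`λ = (−B(∇T,∇T))^{-1/2}`, `n = −λ·∇T` the future unit normal, and
`ξ = ∇T / B(∇T,∇T)`. If `v` is a differentiable vector field tangent to the level sets
of `T` commuting with `ξ`, then `ξ·B(v,v) = 2 λ B(Dn(v), v) ≥ 0`. -/
theorem stmt5 (Ω : Set (Fin 3 → ℝ)) (hΩ : IsOpen Ω)
    (T : (Fin 3 → ℝ) → ℝ) (hT : ContDiffOn ℝ 2 T Ω)
    (gradT : (Fin 3 → ℝ) → (Fin 3 → ℝ))
    (hgradT : ∀ p ∈ Ω, gradT p = fun i =>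
      if i = 0 then -(fderiv ℝ T p (fun j => if j = 0 then 1 else 0))
      else fderiv ℝ T p (fun j => if j = i then 1 else 0))
    (hchar : ∀ p ∈ Ω, ∀ u : Fin 3 → ℝ, mink (gradT p) u = fderiv ℝ T p u)
    (htimelike : ∀ p ∈ Ω, mink (gradT p) (gradT p) < 0)
    (lam : (Fin 3 → ℝ) → ℝ)
    (hlam : ∀ p ∈ Ω, lam p = (-(mink (gradT p) (gradT p))) ^ (-(1/2 : ℝ)))
    (n : (Fin 3 → ℝ) → (Fin 3 → ℝ))
    (hn : ∀ p ∈ Ω, n p = -(lam p) • gradT p)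
    (ξ : (Fin 3 → ℝ) → (Fin 3 → ℝ))
    (hξ : ∀ p ∈ Ω, ξ p = (mink (gradT p) (gradT p))⁻¹ • gradT p)
    (hquasiconcave : ∀ p ∈ Ω, ∀ X : Fin 3 → ℝ,
      mink (gradT p) X = 0 → 0 ≤ mink (fderiv ℝ n p X) X)
    (v : (Fin 3 → ℝ) → (Fin 3 → ℝ))
    (hvdiff : ∀ p ∈ Ω, DifferentiableAt ℝ v p)
    (hvtangent : ∀ p ∈ Ω, mink (gradT p) (v p) = 0)
    (hvcommute : ∀ p ∈ Ω, fderiv ℝ v p (ξ p) = fderiv ℝ ξ p (v p)) :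
    ∀ p ∈ Ω,
      fderiv ℝ (fun q => mink (v q) (v q)) p (ξ p)
        = 2 * lam p * mink (fderiv ℝ n p (v p)) (v p) ∧
      0 ≤ fderiv ℝ (fun q => mink (v q) (v q)) p (ξ p) := by
  intro p hp
  have hmem : Ω ∈ nhds p := hΩ.mem_nhds hp
  -- local formula for gradT
  set Gf : (Fin 3 → ℝ) → (Fin 3 → ℝ) := fun q => fun i =>
      if i = 0 then -(fderiv ℝ T q (fun j => if j = 0 then 1 else 0))
      else fderiv ℝ T q (fun j => if j = i then 1 else 0) with hGfdef
  have hGeq : ∀ q ∈ Ω, gradT q = Gf q := hgradT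
  -- differentiability of fderiv T
  have hfd : ContDiffOn ℝ 1 (fderiv ℝ T) Ω := hT.fderiv_of_isOpen hΩ (by norm_num)
  have hfd' : DifferentiableAt ℝ (fderiv ℝ T) p :=
    ((hfd.differentiableOn one_ne_zero).differentiableAt hmem)
  have hcomp : ∀ u : Fin 3 → ℝ, DifferentiableAt ℝ (fun q => fderiv ℝ T q u) p :=
    fun u => hfd'.clm_apply (differentiableAt_const u)
  have hGfi : ∀ i : Fin 3, DifferentiableAt ℝ (fun q => Gf q i) p := by
    intro i
    by_cases hi : i = 0
    · simp only [hGfdef, hi, if_pos rfl]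
      exact (hcomp _).neg
    · simp only [hGfdef, if_neg hi]
      exact hcomp _
  have hGfd : DifferentiableAt ℝ Gf p := differentiableAt_pi.2 hGfi
  -- differentiability of the local formula for mink (gradT q) (gradT q)
  have hmdiff : DifferentiableAt ℝ (fun q => mink (Gf q) (Gf q)) p := by
    simp only [mink]
    exact (((hGfi 0).mul (hGfi 0)).neg.add ((hGfi 1).mul (hGfi 1))).add
      ((hGfi 2).mul (hGfi 2))
  have hGp : gradT p = Gf p := hGeq p hp
  have hmneg : mink (Gf p) (Gf p) < 0 := by rw [← hGp]; exact htimelike p hp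
  -- lam is differentiable at p
  have hlamfdiff : DifferentiableAt ℝ
      (fun q => (-(mink (Gf q) (Gf q))) ^ (-(1/2 : ℝ))) p :=
    hmdiff.neg.rpow_const (Or.inl (by rw [Pi.neg_apply]; linarith))
  have hlamEq : lam =ᶠ[nhds p] (fun q => (-(mink (Gf q) (Gf q))) ^ (-(1/2 : ℝ))) :=
    Filter.eventuallyEq_of_mem hmem (fun q hq => by rw [hlam q hq, hGeq q hq])
  have hlamdiff : DifferentiableAt ℝ lam p :=
    hlamfdiff.congr_of_eventuallyEq hlamEq
  -- n is differentiable at p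
  have hnfdiff : DifferentiableAt ℝ
      (fun q => (-((-(mink (Gf q) (Gf q))) ^ (-(1/2 : ℝ)))) • Gf q) p :=
    hlamfdiff.neg.smul hGfd
  have hnEq : n =ᶠ[nhds p]
      (fun q => (-((-(mink (Gf q) (Gf q))) ^ (-(1/2 : ℝ)))) • Gf q) :=
    Filter.eventuallyEq_of_mem hmem (fun q hq => by
      rw [hn q hq, hlam q hq, hGeq q hq])
  have hndiff : DifferentiableAt ℝ n p := hnfdiff.congr_of_eventuallyEq hnEq
  -- ξ = lam • n on Ω
  have hξeq : ∀ q ∈ Ω, ξ q = lam q • n q := by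
    intro q hq
    have hm : mink (gradT q) (gradT q) < 0 := htimelike q hq
    rw [hξ q hq, hn q hq, hlam q hq, smul_smul]
    congr 1
    set m := mink (gradT q) (gradT q) with hmdef
    have hpos : (0 : ℝ) < -m := by linarith
    have hsq : ((-m) ^ (-(1/2 : ℝ))) * ((-m) ^ (-(1/2 : ℝ))) = (-m)⁻¹ := by
      rw [← Real.rpow_add hpos]
      norm_num [Real.rpow_neg_one]
    have : (-m) ^ (-(1/2 : ℝ)) * -(-m) ^ (-(1/2 : ℝ)) = -((-m)⁻¹) := by
      rw [mul_neg, hsq]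
    rw [this, inv_neg, neg_neg]
  have hξEq : ξ =ᶠ[nhds p] (fun q => lam q • n q) :=
    Filter.eventuallyEq_of_mem hmem hξeq
  -- fderiv of ξ at p
  have hsmul : HasFDerivAt (fun q => lam q • n q)
      (lam p • fderiv ℝ n p + (fderiv ℝ lam p).smulRight (n p)) p :=
    hlamdiff.hasFDerivAt.smul hndiff.hasFDerivAt
  have hξfderiv : fderiv ℝ ξ p (v p)
      = lam p • fderiv ℝ n p (v p) + fderiv ℝ lam p (v p) • n p := by
    rw [hξEq.fderiv_eq, hsmul.fderiv]
    simp
  -- fderiv of mink (v q) (v q)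
  set Dv := fderiv ℝ v p with hDv
  have hv : HasFDerivAt v Dv p := (hvdiff p hp).hasFDerivAt
  have hvi : ∀ i : Fin 3, HasFDerivAt (fun q => v q i)
      ((ContinuousLinearMap.proj i : (Fin 3 → ℝ) →L[ℝ] ℝ).comp Dv) p :=
    fun i => (ContinuousLinearMap.proj i : (Fin 3 → ℝ) →L[ℝ] ℝ).hasFDerivAt.comp p hv
  have hsq : HasFDerivAt (fun q => mink (v q) (v q))
      (-(v p 0 • (ContinuousLinearMap.proj 0 : (Fin 3 → ℝ) →L[ℝ] ℝ).comp Dv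
          + v p 0 • (ContinuousLinearMap.proj 0 : (Fin 3 → ℝ) →L[ℝ] ℝ).comp Dv)
        + (v p 1 • (ContinuousLinearMap.proj 1 : (Fin 3 → ℝ) →L[ℝ] ℝ).comp Dv
          + v p 1 • (ContinuousLinearMap.proj 1 : (Fin 3 → ℝ) →L[ℝ] ℝ).comp Dv)
        + (v p 2 • (ContinuousLinearMap.proj 2 : (Fin 3 → ℝ) →L[ℝ] ℝ).comp Dv
          + v p 2 • (ContinuousLinearMap.proj 2 : (Fin 3 → ℝ) →L[ℝ] ℝ).comp Dv)) p := by
    simpa only [mink, Pi.mul_def, Pi.add_def, Pi.neg_def] using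
      ((((hvi 0).mul (hvi 0)).neg.add ((hvi 1).mul (hvi 1))).add ((hvi 2).mul (hvi 2)))
  have hval : fderiv ℝ (fun q => mink (v q) (v q)) p (ξ p)
      = 2 * mink (Dv (ξ p)) (v p) := by
    rw [hsq.fderiv]
    simp only [ContinuousLinearMap.add_apply, ContinuousLinearMap.neg_apply,
      ContinuousLinearMap.smul_apply, ContinuousLinearMap.comp_apply,
      ContinuousLinearMap.proj_apply, smul_eq_mul, mink]
    ring
  -- the commuting hypothesis
  have hcomm : Dv (ξ p) = fderiv ℝ ξ p (v p) := hvcommute p hp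
  -- B(n p, v p) = 0
  have hnv : mink (n p) (v p) = 0 := by
    rw [hn p hp, mink_smul_left, hvtangent p hp, mul_zero]
  -- main identity
  have hmain : fderiv ℝ (fun q => mink (v q) (v q)) p (ξ p)
      = 2 * lam p * mink (fderiv ℝ n p (v p)) (v p) := by
    rw [hval, hcomm, hξfderiv, mink_add_left, mink_smul_left, mink_smul_left, hnv]
    ring
  refine ⟨hmain, ?_⟩
  rw [hmain]
  have hlampos : 0 < lam p := by
    rw [hlam p hp]
    exact Real.rpow_pos_of_pos (by linarith [htimelike p hp]) _
  have hq := hquasiconcave p hp (v p) (hvtangent p hp)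
  positivity
end
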